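/- Let A = (a_{ij}) be an invertible d×d integer matrix. Then the map sending p = (p₁, …, p_d) ∈ ℚ^d to (e^{2πip₁}, …, e^{2πip_d}) ∈ (ℂ^×)^d induces a group isomorphism from {p ∈ ℚ^d/ℤ^d : Ap ∈ ℤ^d} onto the group Aut(W) = {γ ∈ (ℂ^×)^d : ∏_{j=1}^d γ_j^{a_{ij}} = 1 for all i}; in particular every component of every element of Aut(W) is a root of unity, and Aut(W) is generated by the images of the d columns of A^{−1}. -/

import Mathlib

open scoped BigOperators

/-- The group `Aut(W)` of diagonal symmetries of the potential
`W = Σ_i Π_j x_j^{a_{ij}}`: all `γ ∈ (ℂ^×)^d` with `Π_j γ_j^{a_{ij}} = 1` for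
every `i`. -/
def AutW {d : ℕ} (A : Matrix (Fin d) (Fin d) ℤ) : Subgroup (Fin d → ℂˣ) where
  carrier := {γ | ∀ i, ∏ j, (γ j) ^ (A i j) = 1}
  one_mem' := by intro i; simp
  mul_mem' := by
    intro a b ha hb i
    have h : ∀ j, ((a * b) j) ^ (A i j) = (a j) ^ (A i j) * (b j) ^ (A i j) := by
      intro j; rw [Pi.mul_apply, mul_zpow]
    simp only [h, Finset.prod_mul_distrib, ha i, hb i, one_mul]
  inv_mem' := by
    intro a ha i
    have h : ∀ j, (a⁻¹ j) ^ (A i j) = ((a j) ^ (A i j))⁻¹ := by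
      intro j; rw [Pi.inv_apply, inv_zpow]
    rw [Finset.prod_congr rfl (fun j _ => h j), Finset.prod_inv_distrib]
    rw [show (∏ j, (a j) ^ (A i j)) = 1 from ha i, inv_one]

/-- `p ↦ e^{2πip}` as a nonzero complex number. -/
noncomputable def expUnit (p : ℚ) : ℂˣ :=
  Units.mk0 (Complex.exp (2 * Real.pi * Complex.I * (p : ℂ))) (Complex.exp_ne_zero _)

/-- `(p₁, …, p_d) ↦ (e^{2πip₁}, …, e^{2πip_d})`. -/
noncomputable def expMap {d : ℕ} (p : Fin d → ℚ) : Fin d → ℂˣ :=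
  fun j => expUnit (p j)

lemma expUnit_zero : expUnit 0 = 1 := by
  ext; simp [expUnit]

lemma expUnit_add (p q : ℚ) : expUnit (p + q) = expUnit p * expUnit q := by
  ext
  simp only [expUnit, Units.val_mul, Units.val_mk0, ← Complex.exp_add]
  congr 1; push_cast; ring

lemma expUnit_zpow (n : ℤ) (p : ℚ) : expUnit p ^ n = expUnit (n * p) := by
  ext
  rw [Units.val_zpow_eq_zpow_val]
  simp only [expUnit, Units.val_mk0]
  rw [← Complex.exp_int_mul]
  congr 1; push_cast; ring

lemma expUnit_sum {ι : Type*} (s : Finset ι) (f : ι → ℚ) :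
    expUnit (∑ i ∈ s, f i) = ∏ i ∈ s, expUnit (f i) := by
  classical
  induction s using Finset.induction_on with
  | empty => simp [expUnit_zero]
  | insert _ _ h ih => rw [Finset.sum_insert h, Finset.prod_insert h, expUnit_add, ih]

lemma expUnit_eq_one_iff (q : ℚ) : expUnit q = 1 ↔ ∃ m : ℤ, q = (m : ℚ) := by
  constructor
  · intro h
    have h1 : Complex.exp (2 * Real.pi * Complex.I * q) = 1 := congrArg Units.val h
    rw [Complex.exp_eq_one_iff] at h1
    obtain ⟨n, hn⟩ := h1
    refine ⟨n, ?_⟩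
    have hne : (2 * (Real.pi : ℂ) * Complex.I) ≠ 0 :=
      mul_ne_zero (mul_ne_zero two_ne_zero
        (Complex.ofReal_ne_zero.mpr Real.pi_ne_zero)) Complex.I_ne_zero
    have h2 : (2 * (Real.pi : ℂ) * Complex.I) * q = (2 * (Real.pi : ℂ) * Complex.I) * n := by
      rw [hn]; ring
    have h3 := mul_left_cancel₀ hne h2
    exact_mod_cast h3
  · rintro ⟨m, rfl⟩
    ext
    simp only [expUnit, Units.val_mk0, Units.val_one]
    rw [show (2 * (Real.pi : ℂ) * Complex.I * ((m : ℚ) : ℂ))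
        = (m : ℤ) * (2 * Real.pi * Complex.I) by push_cast; ring]
    exact Complex.exp_int_mul_two_pi_mul_I m

lemma prod_zpow_sum {ι : Type*} (x : ℂˣ) (s : Finset ι) (f : ι → ℤ) :
    ∏ i ∈ s, x ^ f i = x ^ (∑ i ∈ s, f i) := by
  classical
  induction s using Finset.induction_on with
  | empty => simp
  | insert _ _ h ih => rw [Finset.prod_insert h, Finset.sum_insert h, ih, zpow_add]

lemma prod_pow_matrix {d : ℕ} (γ : Fin d → ℂˣ) (M : Matrix (Fin d) (Fin d) ℤ) (c : Fin d → ℤ) :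
    ∏ i, (∏ k, γ k ^ M i k) ^ c i = ∏ k, γ k ^ (∑ i, c i * M i k) := by
  calc ∏ i, (∏ k, γ k ^ M i k) ^ c i
      = ∏ i, ∏ k, γ k ^ (c i * M i k) := by
        refine Finset.prod_congr rfl fun i _ => ?_
        rw [← Finset.prod_zpow]
        refine Finset.prod_congr rfl fun k _ => ?_
        rw [← zpow_mul, mul_comm (M i k)]
    _ = ∏ k, ∏ i, γ k ^ (c i * M i k) := Finset.prod_comm
    _ = ∏ k, γ k ^ (∑ i, c i * M i k) :=
        Finset.prod_congr rfl fun k _ => prod_zpow_sum _ _ _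

lemma expMap_mem_AutW {d : ℕ} (A : Matrix (Fin d) (Fin d) ℤ) (p : Fin d → ℚ)
    (hp : ∀ i, ∃ m : ℤ, ∑ j, (A i j : ℚ) * p j = (m : ℚ)) :
    expMap p ∈ AutW A := by
  intro i
  obtain ⟨m, hm⟩ := hp i
  have h1 : ∏ j, (expMap p j) ^ (A i j) = expUnit (∑ j, (A i j : ℚ) * p j) := by
    rw [expUnit_sum]
    exact Finset.prod_congr rfl fun j _ => expUnit_zpow _ _
  rw [h1, hm]
  exact (expUnit_eq_one_iff _).mpr ⟨m, rfl⟩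

lemma zpow_det_eq_one {d : ℕ} (A : Matrix (Fin d) (Fin d) ℤ) (γ : Fin d → ℂˣ)
    (hγ : γ ∈ AutW A) (j : Fin d) : γ j ^ A.det = 1 := by
  have h1 : ∏ i, (∏ k, γ k ^ A i k) ^ (A.adjugate j i) = 1 :=
    Finset.prod_eq_one fun i _ => by rw [hγ i, one_zpow]
  rw [prod_pow_matrix] at h1
  have h2 : ∀ k, (∑ i, A.adjugate j i * A i k) = if j = k then A.det else 0 := by
    intro k
    have h := congrFun (congrFun (Matrix.adjugate_mul A) j) k
    rw [Matrix.mul_apply] at h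
    simpa [Matrix.smul_apply, Matrix.one_apply] using h
  have h3 : ∏ k, γ k ^ (∑ i, A.adjugate j i * A i k) = γ j ^ A.det := by
    rw [Finset.prod_eq_single j]
    · rw [h2 j, if_pos rfl]
    · intro k _ hk
      rw [h2 k, if_neg (fun h => hk h.symm), zpow_zero]
    · intro h; exact absurd (Finset.mem_univ j) h
  rw [h3] at h1
  exact h1


/-- the map `p ↦ (e^{2πip_j})_j` induces a group isomorphism from
`{p ∈ ℚ^d/ℤ^d : Ap ∈ ℤ^d}` onto `Aut(W)`: it is a homomorphism mapping
`{p : Ap ∈ ℤ^d}` into `Aut(W)`, its kernel is exactly `ℤ^d`, and it is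
surjective onto `Aut(W)`.  In particular every component of every element of
`Aut(W)` is a root of unity, and `Aut(W)` is generated by the images of the `d`
columns of `A⁻¹`. -/
theorem expMap_induces_iso_AutW
    (d : ℕ) (A : Matrix (Fin d) (Fin d) ℤ)
    (hA : (A.map (fun a => (a : ℚ))).det ≠ 0) :
    (∀ p : Fin d → ℚ, (∀ i, ∃ m : ℤ, ∑ j, (A i j : ℚ) * p j = (m : ℚ)) →
      expMap p ∈ AutW A) ∧
    (∀ p p' : Fin d → ℚ, expMap (p + p') = expMap p * expMap p') ∧
    (∀ p : Fin d → ℚ, (∀ i, ∃ m : ℤ, ∑ j, (A i j : ℚ) * p j = (m : ℚ)) →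
      (expMap p = 1 ↔ ∀ j, ∃ m : ℤ, p j = (m : ℚ))) ∧
    (∀ γ ∈ AutW A, ∃ p : Fin d → ℚ,
      (∀ i, ∃ m : ℤ, ∑ j, (A i j : ℚ) * p j = (m : ℚ)) ∧ expMap p = γ) ∧
    (∀ γ ∈ AutW A, ∀ j, ∃ n : ℕ, 0 < n ∧ (γ j) ^ n = 1) ∧
    Subgroup.closure
      (Set.range (fun i : Fin d =>
        expMap (fun j => ((A.map (fun a => (a : ℚ)))⁻¹) j i))) = AutW A := by
  classical
  set A' : Matrix (Fin d) (Fin d) ℚ := A.map (fun a => (a : ℚ)) with hA'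
  have hdet : A.det ≠ 0 := by
    intro h
    apply hA
    rw [show A' = (Int.castRingHom ℚ).mapMatrix A from rfl, ← RingHom.map_det, h]
    simp
  set N : ℕ := A.det.natAbs with hNdef
  have hN : 0 < N := Int.natAbs_pos.mpr hdet
  haveI : NeZero N := ⟨hN.ne'⟩
  -- roots of unity
  have hroots : ∀ γ ∈ AutW A, ∀ j, (γ j) ^ N = 1 := by
    intro γ hγ j
    have h := zpow_det_eq_one A γ hγ j
    rcases Int.natAbs_eq A.det with he | he
    · rw [he] at h; rwa [zpow_natCast] at h
    · rw [he, zpow_neg, zpow_natCast, inv_eq_one] at h; exact h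
  -- surjectivity
  have hsurj : ∀ γ ∈ AutW A, ∃ p : Fin d → ℚ,
      (∀ i, ∃ m : ℤ, ∑ j, (A i j : ℚ) * p j = (m : ℚ)) ∧ expMap p = γ := by
    intro γ hγ
    have hprim := Complex.isPrimitiveRoot_exp N hN.ne'
    have hroot : ∀ j, ((γ j : ℂ)) ^ N = 1 := by
      intro j
      have := congrArg Units.val (hroots γ hγ j)
      simpa using this
    have hch : ∀ j, ∃ k : ℕ, k < N ∧
        Complex.exp (2 * Real.pi * Complex.I / N) ^ k = (γ j : ℂ) := by
      intro j
      obtain ⟨k, hk, hke⟩ := hprim.eq_pow_of_pow_eq_one (hroot j)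
      exact ⟨k, hk, hke⟩
    choose k hk hke using hch
    have hNc : (N : ℂ) ≠ 0 := Nat.cast_ne_zero.mpr hN.ne'
    have hexp : ∀ j, expUnit ((k j : ℚ) / (N : ℚ)) = γ j := by
      intro j
      ext
      rw [← hke j]
      simp only [expUnit, Units.val_mk0]
      rw [← Complex.exp_nat_mul]
      congr 1
      push_cast
      field_simp
    refine ⟨fun j => (k j : ℚ) / (N : ℚ), ?_, funext fun j => hexp j⟩
    intro i
    have h1 : expUnit (∑ j, (A i j : ℚ) * ((k j : ℚ) / (N : ℚ))) = 1 := by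
      rw [expUnit_sum]
      have : ∀ j, expUnit ((A i j : ℚ) * ((k j : ℚ) / (N : ℚ))) = (γ j) ^ (A i j) := by
        intro j
        rw [← expUnit_zpow, hexp j]
      rw [Finset.prod_congr rfl fun j _ => this j]
      exact hγ i
    exact (expUnit_eq_one_iff _).mp h1
  refine ⟨expMap_mem_AutW A, ?_, ?_, hsurj, fun γ hγ j => ⟨N, hN, hroots γ hγ j⟩, ?_⟩
  · intro p p'
    funext j
    exact expUnit_add (p j) (p' j)
  · intro p _
    constructor
    · intro h j
      have := congrFun h j
      exact (expUnit_eq_one_iff (p j)).mp this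
    · intro h
      funext j
      obtain ⟨m, hm⟩ := h j
      show expUnit (p j) = 1
      rw [hm]
      exact (expUnit_eq_one_iff _).mpr ⟨m, rfl⟩
  · -- closure
    have hU : IsUnit A'.det := isUnit_iff_ne_zero.mpr hA
    have hgen : ∀ i : Fin d, expMap (fun j => A'⁻¹ j i) ∈ AutW A := by
      intro i
      apply expMap_mem_AutW
      intro i'
      refine ⟨if i' = i then 1 else 0, ?_⟩
      have h1 : ∑ j, (A i' j : ℚ) * A'⁻¹ j i = (A' * A'⁻¹) i' i := by
        rw [Matrix.mul_apply]
        exact Finset.sum_congr rfl fun j _ => rfl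
      rw [h1, Matrix.mul_nonsing_inv A' hU, Matrix.one_apply]
      split <;> simp
    apply le_antisymm
    · rw [Subgroup.closure_le]
      rintro _ ⟨i, rfl⟩
      exact hgen i
    · intro γ hγ
      obtain ⟨p, hp, hexp⟩ := hsurj γ hγ
      choose m hm using hp
      have hAp : A'.mulVec p = fun i => (m i : ℚ) := by
        funext i
        show ∑ j, A' i j * p j = (m i : ℚ)
        exact hm i
      have hpj : p = fun j => ∑ i, A'⁻¹ j i * (m i : ℚ) := by
        have h2 : (A'⁻¹).mulVec (A'.mulVec p) = p := by
          rw [Matrix.mulVec_mulVec, Matrix.nonsing_inv_mul A' hU, Matrix.one_mulVec]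
        rw [hAp] at h2
        funext j
        rw [← congrFun h2 j]
        rfl
      have hprod : γ = ∏ i, (expMap (fun j => A'⁻¹ j i)) ^ (m i) := by
        rw [← hexp]
        funext j
        rw [Finset.prod_apply]
        have h3 : ∀ i, ((expMap (fun j => A'⁻¹ j i)) ^ (m i)) j
            = expUnit ((m i : ℚ) * A'⁻¹ j i) := by
          intro i
          rw [Pi.pow_apply]
          exact expUnit_zpow _ _
        rw [Finset.prod_congr rfl fun i _ => h3 i, ← expUnit_sum]
        show expUnit (p j) = _
        congr 1
        rw [congrFun hpj j]
        exact Finset.sum_congr rfl fun i _ => mul_comm _ _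
      rw [hprod]
      exact Subgroup.prod_mem _ fun i _ =>
        Subgroup.zpow_mem _ (Subgroup.subset_closure (Set.mem_range_self i)) _
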